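/- Let 𝒞_1, …, 𝒞_m be classes of subsets of a common set with finite VC dimensions d_VC(𝒞_j) = d_j < +∞, and let d = Σ_{j=1}^m d_j. Define ⊓_{j=1}^m 𝒞_j = { ∩_{j=1}^m C_j : C_j ∈ 𝒞_j } and ⊔_{j=1}^m 𝒞_j = { ∪_{j=1}^m C_j : C_j ∈ 𝒞_j }. Then max( d_VC(⊓_{j=1}^m 𝒞_j), d_VC(⊔_{j=1}^m 𝒞_j) ) ≤ (e/((e−1)·log 2)) · d · log( (e/log 2) · m ). -/

import Mathlib

open MeasureTheory Real Set

/-- A family `H` of subsets of `α` shatters a finite set `S` if every subset `D ⊆ S`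
can be picked out by some `C ∈ H`. -/
def ShattersFam {α : Type*} (H : Set (Set α)) (S : Finset α) : Prop :=
  ∀ D : Finset α, D ⊆ S → ∃ C ∈ H, (D : Set α) ⊆ C ∧ ((S : Set α) \ (D : Set α)) ∩ C = ∅

/-- The VC dimension of a family of subsets: the supremum (in `ℕ∞`) of cardinalities
of finite sets it shatters. -/
noncomputable def vcDim {α : Type*} (H : Set (Set α)) : ℕ∞ :=
  ⨆ S ∈ {S : Finset α | ShattersFam H S}, (S.card : ℕ∞)

namespace Statement2Aux

lemma sauer_numeric {n k : ℕ} (hk : 1 ≤ k) (hkn : k ≤ n) :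
    (∑ i ∈ Finset.range (k+1), (n.choose i : ℝ)) ≤ (Real.exp 1 * n / k)^k := by
  have hn0 : 0 < n := hk.trans hkn
  have hn : 0 < (n:ℝ) := by exact_mod_cast hn0
  have hkR : 0 < (k:ℝ) := by exact_mod_cast hk
  set r : ℝ := (k:ℝ)/n with hr
  have hr0 : 0 < r := by positivity
  have hr1 : r ≤ 1 := by rw [hr, div_le_one hn]; exact_mod_cast hkn
  have h1 : r^k * ∑ i ∈ Finset.range (k+1), (n.choose i : ℝ)
      ≤ ∑ i ∈ Finset.range (k+1), (n.choose i : ℝ) * r^i := by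
    rw [Finset.mul_sum]
    refine Finset.sum_le_sum fun i hi => ?_
    rw [mul_comm]
    have : r ^ k ≤ r ^ i :=
      pow_le_pow_of_le_one hr0.le hr1 (by simpa using Nat.lt_succ_iff.mp (Finset.mem_range.mp hi))
    exact mul_le_mul_of_nonneg_left this (by positivity)
  have h2 : ∑ i ∈ Finset.range (k+1), (n.choose i : ℝ) * r^i
      ≤ ∑ i ∈ Finset.range (n+1), (n.choose i : ℝ) * r^i := by
    refine Finset.sum_le_sum_of_subset_of_nonneg (Finset.range_subset_range.mpr (by omega)) fun i _ _ => by positivity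
  have h3 : ∑ i ∈ Finset.range (n+1), (n.choose i : ℝ) * r^i = (1+r)^n := by
    rw [add_comm (1:ℝ) r, add_pow]
    exact Finset.sum_congr rfl fun i hi => by ring
  have h4 : (1+r)^n ≤ (Real.exp 1)^k := by
    calc (1+r)^n ≤ (Real.exp r)^n :=
            pow_le_pow_left₀ (by positivity) (by linarith [Real.add_one_le_exp r]) n
      _ = Real.exp (r * n) := by rw [← Real.exp_nat_mul]; ring_nf
      _ = Real.exp (k:ℝ) := by rw [hr]; field_simp
      _ = (Real.exp 1)^k := by rw [← Real.exp_nat_mul]; ring_nf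
  have key : r^k * ∑ i ∈ Finset.range (k+1), (n.choose i : ℝ) ≤ (Real.exp 1)^k :=
    h1.trans (h2.trans_eq h3) |>.trans h4
  have hrk : 0 < r^k := by positivity
  rw [← le_div_iff₀' hrk] at key
  calc (∑ i ∈ Finset.range (k+1), (n.choose i : ℝ)) ≤ (Real.exp 1)^k / r^k := key
    _ = (Real.exp 1 * n / k)^k := by
        rw [hr, ← div_pow]
        congr 1
        field_simp

lemma amgm_prod {m : ℕ} (d : Fin m → ℕ) (x : ℝ) (hx : 0 ≤ x) (hdd : 1 ≤ ∑ j, d j) :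
    (∏ j, (x / (d j : ℝ)) ^ (d j)) ≤ (x * m / (∑ j, (d j : ℝ))) ^ (∑ j, d j) := by
  classical
  set dd : ℕ := ∑ j, d j with hdddef
  have hddR : 0 < (dd:ℝ) := by exact_mod_cast hdd
  have hcast : (∑ j, (d j : ℝ)) = (dd:ℝ) := by rw [hdddef]; push_cast; ring
  set w : Fin m → ℝ := fun j => (d j : ℝ)/dd with hwdef
  set z : Fin m → ℝ := fun j => x / (d j : ℝ) with hzdef
  have hzn : ∀ j, 0 ≤ z j := fun j => by positivity
  have hw : ∀ j ∈ Finset.univ, 0 ≤ w j := fun j _ => by positivity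
  have hw1 : ∑ j, w j = 1 := by
    simp only [hwdef]
    rw [← Finset.sum_div, hcast, div_self hddR.ne']
  have amgm := Real.geom_mean_le_arith_mean_weighted Finset.univ w z hw hw1
    (fun j _ => hzn j)
  have hsum : ∑ j, w j * z j ≤ x * m / dd := by
    calc ∑ j, w j * z j ≤ ∑ _j : Fin m, x/(dd:ℝ) := by
          refine Finset.sum_le_sum fun j _ => ?_
          rcases Nat.eq_zero_or_pos (d j) with h0 | hpos
          · simp only [hwdef, hzdef, h0, Nat.cast_zero, zero_div, zero_mul]
            positivity
          · have hdj : ((d j : ℝ)) ≠ 0 := by positivity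
            refine le_of_eq ?_
            simp only [hwdef, hzdef]
            field_simp
      _ = m * (x/(dd:ℝ)) := by
          rw [Finset.sum_const, Finset.card_univ, Fintype.card_fin]; simp [nsmul_eq_mul]
      _ = x * m / dd := by ring
  have hstep : ∀ j, (z j) ^ (d j) = (z j ^ w j) ^ dd := by
    intro j
    rw [← Real.rpow_natCast (z j ^ w j) dd, ← Real.rpow_mul (hzn j)]
    have hwj : w j * dd = (d j : ℝ) := by
      simp only [hwdef]; field_simp
    rw [hwj, Real.rpow_natCast]
  calc ∏ j, (x/(d j:ℝ))^(d j) = (∏ j, z j ^ w j)^dd := by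
        rw [← Finset.prod_pow]
        exact Finset.prod_congr rfl fun j _ => hstep j
    _ ≤ (∑ j, w j * z j)^dd :=
        pow_le_pow_left₀ (Finset.prod_nonneg fun j _ => Real.rpow_nonneg (hzn j) _) amgm dd
    _ ≤ (x * m / dd)^dd :=
        pow_le_pow_left₀
          (Finset.sum_nonneg fun j _ => mul_nonneg (hw j (Finset.mem_univ j)) (hzn j)) hsum dd
    _ = (x * m / (∑ j, (d j:ℝ)))^dd := by rw [hcast]

lemma analytic {n m dd : ℕ} (hm : 1 ≤ m) (hdd : 1 ≤ dd) (hn : 1 ≤ n)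
    (h : (2:ℝ)^n ≤ (Real.exp 1 * n * m / dd)^dd) :
    (n:ℝ) ≤ Real.exp 1 / ((Real.exp 1 - 1) * Real.log 2) * dd *
      Real.log (Real.exp 1 / Real.log 2 * m) := by
  set e1 := Real.exp 1 with he1def
  have he1 : (1:ℝ) < e1 := by
    rw [he1def]; calc (1:ℝ) < 2.7182818283 := by norm_num
      _ < Real.exp 1 := Real.exp_one_gt_d9
  have hl2 : 0 < Real.log 2 := Real.log_pos (by norm_num)
  have hl2' : Real.log 2 < 1 := by
    have := Real.log_lt_sub_one_of_pos (x := 2) (by norm_num) (by norm_num)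
    linarith
  have hnR : 0 < (n:ℝ) := by exact_mod_cast hn
  have hmR : 0 < (m:ℝ) := by exact_mod_cast hm
  have hddR : 0 < (dd:ℝ) := by exact_mod_cast hdd
  set l2 := Real.log 2 with hl2def
  set L := Real.log (e1 / l2 * m) with hLdef
  set X := (n:ℝ) * l2 / dd with hXdef
  have hX : 0 < X := by positivity
  have hbase : 0 < e1 * n * m / dd := by positivity
  have hlog : (n:ℝ) * l2 ≤ dd * Real.log (e1 * n * m / dd) := by
    have := Real.log_le_log (by positivity) h
    rw [Real.log_pow, Real.log_pow] at this
    calc (n:ℝ) * l2 = n * Real.log 2 := rfl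
      _ ≤ dd * Real.log (e1 * n * m / dd) := this
  have hl2ne : l2 ≠ 0 := hl2.ne'
  have hddne : (dd:ℝ) ≠ 0 := hddR.ne'
  have he1ne : e1 ≠ 0 := by positivity
  have hsplit : Real.log (e1 * n * m / dd) = L + Real.log X := by
    rw [hLdef, hXdef, ← Real.log_mul (by positivity) hX.ne']
    congr 1
    rw [hXdef]
    field_simp
  have hlogX : Real.log X ≤ X / e1 := by
    have h1 : Real.log (X / e1) ≤ X / e1 - 1 :=
      Real.log_le_sub_one_of_pos (by positivity)
    have h2 : Real.log (X / e1) = Real.log X - 1 := by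
      rw [Real.log_div hX.ne' (by positivity), he1def, Real.log_exp]
    linarith
  have key2 : (n:ℝ) * l2 - n * l2 / e1 ≤ dd * L := by
    have : (n:ℝ) * l2 ≤ dd * L + dd * (X / e1) := by
      calc (n:ℝ) * l2 ≤ dd * (L + Real.log X) := by rw [← hsplit]; exact hlog
        _ ≤ dd * (L + X / e1) := by
            refine mul_le_mul_of_nonneg_left (by linarith) hddR.le
        _ = dd * L + dd * (X / e1) := by ring
    have hXe : (dd:ℝ) * (X / e1) = n * l2 / e1 := by
      rw [hXdef]; field_simp
    linarith
  have hA : 0 < (e1 - 1) * l2 := mul_pos (by linarith) hl2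
  rw [div_mul_eq_mul_div, div_mul_eq_mul_div, le_div_iff₀ hA]
  have hmul : e1 * ((n:ℝ) * l2 - n * l2 / e1) ≤ e1 * (dd * L) :=
    mul_le_mul_of_nonneg_left key2 (by positivity)
  have hEq : e1 * ((n:ℝ) * l2 - n * l2 / e1) = (n:ℝ) * ((e1 - 1) * l2) := by
    field_simp
  calc (n:ℝ) * ((e1 - 1) * l2) = e1 * ((n:ℝ) * l2 - n * l2 / e1) := hEq.symm
    _ ≤ e1 * (dd * L) := hmul
    _ = e1 * dd * L := by ring

lemma card_le_of_shatters {α : Type*} {H : Set (Set α)} {k : ℕ} (h : vcDim H = (k:ℕ∞))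
    {s : Finset α} (hs : ShattersFam H s) : s.card ≤ k := by
  have h1 : (s.card : ℕ∞) ≤ vcDim H :=
    le_iSup₂ (f := fun (S : Finset α) (_ : S ∈ {S : Finset α | ShattersFam H S}) =>
      (S.card : ℕ∞)) s hs
  rw [h] at h1
  exact_mod_cast h1

/-- the trace of a family of sets on a finset, as a finset of finsets -/
noncomputable def traceF {α : Type*} (H : Set (Set α)) (S : Finset α) : Finset (Finset α) :=
  @Finset.filter _ (fun A => ∃ C ∈ H, (A : Set α) = C ∩ (S : Set α))
    (Classical.decPred _) S.powerset

lemma mem_traceF {α : Type*} {H : Set (Set α)} {S A : Finset α} :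
    A ∈ traceF H S ↔ A ⊆ S ∧ ∃ C ∈ H, (A : Set α) = C ∩ (S : Set α) := by
  simp [traceF, Finset.mem_filter, Finset.mem_powerset]

lemma card_traceF_le {α : Type*} {H : Set (Set α)} {S : Finset α} {k : ℕ}
    (hk : ∀ s : Finset α, ShattersFam H s → s.card ≤ k) :
    (traceF H S).card ≤ ∑ i ∈ Finset.range (k+1), S.card.choose i := by
  classical
  have h1 : (traceF H S).card ≤ (traceF H S).shatterer.card :=
    Finset.card_le_card_shatterer _
  have h2 : (traceF H S).shatterer ⊆ S.powerset.filter (fun A => A.card ≤ k) := by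
    intro s hs
    rw [Finset.mem_shatterer] at hs
    have hsS : s ⊆ S := by
      obtain ⟨t, ht, hst⟩ := hs.exists_superset
      exact hst.trans (mem_traceF.mp ht).1
    have hfam : ShattersFam H s := by
      intro D hD
      obtain ⟨u, hu, hsu⟩ := hs hD
      obtain ⟨-, C, hC, huC⟩ := mem_traceF.mp hu
      have hDset : (D : Set α) = (s : Set α) ∩ C := by
        have hsSset : (s : Set α) ⊆ (S : Set α) := by exact_mod_cast hsS
        rw [← hsu]
        push_cast
        rw [huC]
        ext x
        simp only [Set.mem_inter_iff, Finset.mem_coe]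
        constructor
        · rintro ⟨h1, h2, -⟩; exact ⟨h1, h2⟩
        · rintro ⟨h1, h2⟩; exact ⟨h1, h2, hsSset h1⟩
      refine ⟨C, hC, ?_, ?_⟩
      · rw [hDset]; exact Set.inter_subset_right
      · rw [hDset]
        ext x
        simp only [Set.mem_inter_iff, Set.mem_diff, Set.mem_empty_iff_false, iff_false]
        tauto
    exact Finset.mem_filter.mpr ⟨Finset.mem_powerset.mpr hsS, hk s hfam⟩
  have h3 : (S.powerset.filter (fun A => A.card ≤ k)).card
      = ∑ i ∈ Finset.range (k+1), S.card.choose i := by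
    have heq : S.powerset.filter (fun A => A.card ≤ k)
        = (Finset.range (k+1)).biUnion (fun i => Finset.powersetCard i S) := by
      ext A
      simp only [Finset.mem_filter, Finset.mem_powerset, Finset.mem_biUnion,
        Finset.mem_range, Finset.mem_powersetCard, Nat.lt_succ_iff]
      constructor
      · rintro ⟨h1, h2⟩; exact ⟨A.card, h2, h1, rfl⟩
      · rintro ⟨i, hi, h1, rfl⟩; exact ⟨h1, hi⟩
    rw [heq, Finset.card_biUnion]
    · exact Finset.sum_congr rfl fun i _ => Finset.card_powersetCard i S
    · intro i _ j _ hij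
      simp only [Finset.disjoint_left, Finset.mem_powersetCard]
      rintro A ⟨-, rfl⟩ ⟨-, h⟩
      exact hij h
  exact h1.trans (le_of_le_of_eq (Finset.card_le_card h2) h3)

lemma pow_le_prod_trace {α : Type*} {m : ℕ} (𝒞 : Fin m → Set (Set α)) (S : Finset α)
    (big : Set (Set α)) (P : (Fin m → Set α) → Set α)
    (hfac : ∀ C ∈ big, ∃ g : Fin m → Set α, (∀ j, g j ∈ 𝒞 j) ∧
      C ∩ (S : Set α) = P (fun j => g j ∩ (S : Set α)))
    (hshat : ShattersFam big S) :
    2 ^ S.card ≤ ∏ j, (traceF (𝒞 j) S).card := by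
  classical
  have hch : ∀ D : Finset α, ∃ t : Fin m → Finset α, D ⊆ S →
      ((∀ j, t j ∈ traceF (𝒞 j) S) ∧ (D : Set α) = P (fun j => (t j : Set α))) := by
    intro D
    by_cases hD : D ⊆ S
    · obtain ⟨C, hC, hDC, hdisj⟩ := hshat D hD
      have hCS : C ∩ (S : Set α) = (D : Set α) := by
        ext x
        constructor
        · rintro ⟨hx1, hx2⟩
          by_contra hxD
          have hmem : x ∈ ((S : Set α) \ (D : Set α)) ∩ C := ⟨⟨hx2, hxD⟩, hx1⟩
          rw [hdisj] at hmem
          exact hmem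
        · intro hx
          exact ⟨hDC hx, by exact_mod_cast hD (by exact_mod_cast hx)⟩
      obtain ⟨g, hg, hfacC⟩ := hfac C hC
      refine ⟨fun j => S.filter (fun x => x ∈ g j), fun _ => ⟨fun j => ?_, ?_⟩⟩
      · rw [mem_traceF]
        refine ⟨Finset.filter_subset _ _, g j, hg j, ?_⟩
        ext x
        simp only [Finset.coe_filter, Set.mem_setOf_eq, Set.mem_inter_iff, Finset.mem_coe]
        tauto
      · rw [← hCS, hfacC]
        have harg : (fun j => g j ∩ (S : Set α)) =
            (fun j => ((S.filter (fun x => x ∈ g j) : Finset α) : Set α)) := by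
          funext j
          ext x
          simp only [Finset.coe_filter, Set.mem_setOf_eq, Set.mem_inter_iff, Finset.mem_coe]
          tauto
        rw [harg]
    · exact ⟨fun _ => ∅, fun h => absurd h hD⟩
  choose t ht using hch
  have hcard : S.powerset.card ≤ (Fintype.piFinset (fun j => traceF (𝒞 j) S)).card := by
    apply Finset.card_le_card_of_injOn t
    · intro D hD
      rw [Finset.mem_coe, Fintype.mem_piFinset]
      exact fun j => ((ht D) (Finset.mem_powerset.mp hD)).1 j
    · intro D hD D' hD' hEq
      have h1 := ((ht D) (Finset.mem_powerset.mp hD)).2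
      have h2 := ((ht D') (Finset.mem_powerset.mp hD')).2
      apply Finset.coe_injective
      rw [h1, h2, hEq]
  rwa [Finset.card_powerset, Fintype.card_piFinset] at hcard

lemma key {α : Type*} {m : ℕ} (hm : 1 ≤ m) (𝒞 : Fin m → Set (Set α)) (d : Fin m → ℕ)
    (hd : ∀ j, vcDim (𝒞 j) = (d j : ℕ∞))
    (S : Finset α) (big : Set (Set α)) (P : (Fin m → Set α) → Set α)
    (hfac : ∀ C ∈ big, ∃ g : Fin m → Set α, (∀ j, g j ∈ 𝒞 j) ∧
      C ∩ (S : Set α) = P (fun j => g j ∩ (S : Set α)))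
    (hshat : ShattersFam big S) :
    (S.card : ℝ) ≤ Real.exp 1 / ((Real.exp 1 - 1) * Real.log 2) * (∑ j, (d j : ℝ)) *
      Real.log (Real.exp 1 / Real.log 2 * m) := by
  classical
  set n := S.card with hn
  set dd := ∑ j, d j with hdd
  have hcastdd : (∑ j, (d j : ℝ)) = (dd:ℝ) := by rw [hdd]; push_cast; ring
  have he1 : (1:ℝ) < Real.exp 1 := by
    calc (1:ℝ) < 2.7182818283 := by norm_num
      _ < Real.exp 1 := Real.exp_one_gt_d9
  have hl2 : 0 < Real.log 2 := Real.log_pos (by norm_num)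
  have hl2' : Real.log 2 < 1 := by
    have := Real.log_lt_sub_one_of_pos (x := 2) (by norm_num) (by norm_num)
    linarith
  have hmR : (1:ℝ) ≤ (m:ℝ) := by exact_mod_cast hm
  -- the key constant is at least 1
  have hKL : (1:ℝ) ≤ Real.exp 1 / ((Real.exp 1 - 1) * Real.log 2) *
      Real.log (Real.exp 1 / Real.log 2 * m) := by
    have hK : (1:ℝ) ≤ Real.exp 1 / ((Real.exp 1 - 1) * Real.log 2) := by
      rw [le_div_iff₀ (mul_pos (by linarith) hl2)]
      nlinarith
    have hL : (1:ℝ) ≤ Real.log (Real.exp 1 / Real.log 2 * m) := by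
      have harg : Real.exp 1 ≤ Real.exp 1 / Real.log 2 * m := by
        rw [div_mul_eq_mul_div, le_div_iff₀ hl2]
        nlinarith
      calc (1:ℝ) = Real.log (Real.exp 1) := (Real.log_exp 1).symm
        _ ≤ Real.log (Real.exp 1 / Real.log 2 * m) :=
            Real.log_le_log (Real.exp_pos 1) harg
    nlinarith
  have hcomb : (2:ℝ)^n ≤ ∏ j, (∑ i ∈ Finset.range (d j + 1), (n.choose i : ℝ)) := by
    have h1 := pow_le_prod_trace 𝒞 S big P hfac hshat
    have h2 : ∀ j, (traceF (𝒞 j) S).card ≤ ∑ i ∈ Finset.range (d j + 1), n.choose i :=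
      fun j => card_traceF_le (fun s hs => card_le_of_shatters (hd j) hs)
    calc (2:ℝ)^n = ((2^n : ℕ) : ℝ) := by push_cast; ring
      _ ≤ ((∏ j, (traceF (𝒞 j) S).card : ℕ) : ℝ) := by exact_mod_cast h1
      _ ≤ ∏ j, (∑ i ∈ Finset.range (d j + 1), (n.choose i:ℝ)) := by
          push_cast
          exact Finset.prod_le_prod (fun j _ => by positivity)
            (fun j _ => by exact_mod_cast h2 j)
  by_cases hcase : n ≤ dd
  · have h1 : (n:ℝ) ≤ (dd:ℝ) := by exact_mod_cast hcase
    have h2 : (dd:ℝ) ≤ Real.exp 1 / ((Real.exp 1 - 1) * Real.log 2) *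
        Real.log (Real.exp 1 / Real.log 2 * m) * dd := by
      nlinarith [Nat.cast_nonneg (α := ℝ) dd]
    rw [hcastdd]
    calc (n:ℝ) ≤ (dd:ℝ) := h1
      _ ≤ _ := h2
      _ = Real.exp 1 / ((Real.exp 1 - 1) * Real.log 2) * (dd:ℝ) *
          Real.log (Real.exp 1 / Real.log 2 * m) := by ring
  · push_neg at hcase
    have hn1 : 1 ≤ n := Nat.one_le_iff_ne_zero.mpr (by omega)
    rcases Nat.eq_zero_or_pos dd with h0 | hddpos
    · exfalso
      have hall : ∀ j, d j = 0 := by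
        intro j
        have := Finset.sum_eq_zero_iff.mp (hdd ▸ h0.symm).symm
        exact this j (Finset.mem_univ j)
      have hle1 : (2:ℝ)^n ≤ 1 := by
        have : ∏ j, (∑ i ∈ Finset.range (d j + 1), (n.choose i : ℝ)) = 1 := by
          refine Finset.prod_eq_one fun j _ => ?_
          simp [hall j]
        linarith [hcomb, this ▸ hcomb]
      have : (2:ℝ)^1 ≤ (2:ℝ)^n := pow_le_pow_right₀ (by norm_num) hn1
      norm_num at this
      linarith
    · have hnR : 0 < (n:ℝ) := by positivity
      have hstep : ∀ j, (∑ i ∈ Finset.range (d j + 1), (n.choose i:ℝ))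
          ≤ (Real.exp 1 * n / (d j))^(d j) := by
        intro j
        rcases Nat.eq_zero_or_pos (d j) with h0 | hpos
        · simp [h0]
        · have hdj_le : d j ≤ n := by
            have : d j ≤ dd := by
              rw [hdd]
              exact Finset.single_le_sum (fun j _ => Nat.zero_le _) (Finset.mem_univ j)
            omega
          exact sauer_numeric hpos hdj_le
      have hprod : (2:ℝ)^n ≤ (Real.exp 1 * n * m / dd)^dd := by
        calc (2:ℝ)^n ≤ ∏ j, (∑ i ∈ Finset.range (d j + 1), (n.choose i : ℝ)) := hcomb
          _ ≤ ∏ j, (Real.exp 1 * n / (d j))^(d j) :=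
              Finset.prod_le_prod (fun j _ => Finset.sum_nonneg fun i _ => by positivity)
                (fun j _ => hstep j)
          _ ≤ (Real.exp 1 * n * m / (∑ j, (d j:ℝ)))^(∑ j, d j) :=
              amgm_prod d (Real.exp 1 * n) (by positivity) hddpos
          _ = (Real.exp 1 * n * m / dd)^dd := by rw [hcastdd, ← hdd]
      rw [hcastdd]
      exact analytic hm hddpos hn1 hprod

end Statement2Aux

/-- VC dimension of intersections and unions of classes.
If `𝒞_1, …, 𝒞_m` have finite VC dimensions `d_j` and `d = Σ d_j`, then both the
class of `m`-fold intersections and the class of `m`-fold unions have VC dimension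
at most `(e/((e−1) log 2)) d log((e/log 2) m)` (stated via shattered sets). -/
theorem statement_2 {α : Type*} {m : ℕ} (hm : 1 ≤ m)
    (𝒞 : Fin m → Set (Set α)) (d : Fin m → ℕ)
    (hd : ∀ j, vcDim (𝒞 j) = (d j : ℕ∞)) :
    (∀ S : Finset α,
        ShattersFam {C | ∃ g : Fin m → Set α, (∀ j, g j ∈ 𝒞 j) ∧ C = ⋂ j, g j} S →
        (S.card : ℝ) ≤ Real.exp 1 / ((Real.exp 1 - 1) * Real.log 2) * (∑ j, (d j : ℝ)) *
          Real.log (Real.exp 1 / Real.log 2 * m)) ∧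
    (∀ S : Finset α,
        ShattersFam {C | ∃ g : Fin m → Set α, (∀ j, g j ∈ 𝒞 j) ∧ C = ⋃ j, g j} S →
        (S.card : ℝ) ≤ Real.exp 1 / ((Real.exp 1 - 1) * Real.log 2) * (∑ j, (d j : ℝ)) *
          Real.log (Real.exp 1 / Real.log 2 * m)) := by
  have hne : Nonempty (Fin m) := ⟨⟨0, hm⟩⟩
  constructor
  · intro S hshat
    refine Statement2Aux.key hm 𝒞 d hd S _ (fun h => ⋂ j, h j) ?_ hshat
    rintro C ⟨g, hg, rfl⟩
    exact ⟨g, hg, by exact Set.iInter_inter (S : Set α) g⟩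
  · intro S hshat
    refine Statement2Aux.key hm 𝒞 d hd S _ (fun h => ⋃ j, h j) ?_ hshat
    rintro C ⟨g, hg, rfl⟩
    exact ⟨g, hg, by exact Set.iUnion_inter (S : Set α) g⟩
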